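/- Let s₁ and s₂ be the birational maps on (q, p, a₁, a₂) given by s₁(q, p, a₁, a₂) = (q, p − a₁/q, −a₁, a₁ + a₂) and s₂(q, p, a₁, a₂) = (q + a₂/p, p, a₁ + a₂, −a₂). Then s₁∘s₂∘s₁ = s₂∘s₁∘s₂ as birational maps (i.e. the maps agree wherever both compositions are defined). -/

import Mathlib

/-- The Bäcklund transformation `s₁` of P_IV:
`s₁(q, p, a₁, a₂) = (q, p − a₁/q, −a₁, a₁ + a₂)`. -/
noncomputable def PIVs₁ {K : Type*} [Field K] (v : K × K × K × K) : K × K × K × K :=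
  (v.1, v.2.1 - v.2.2.1 / v.1, -v.2.2.1, v.2.2.1 + v.2.2.2)

/-- The Bäcklund transformation `s₂` of P_IV:
`s₂(q, p, a₁, a₂) = (q + a₂/p, p, a₁ + a₂, −a₂)`. -/
noncomputable def PIVs₂ {K : Type*} [Field K] (v : K × K × K × K) : K × K × K × K :=
  (v.1 + v.2.2.2 / v.2.1, v.2.1, v.2.2.1 + v.2.2.2, -v.2.2.2)

/-- The braid relation `s₁∘s₂∘s₁ = s₂∘s₁∘s₂` for the Bäcklund transformations of P_IV,
wherever both compositions are defined (no denominator along either composition vanishes). -/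
theorem stmt6 {K : Type*} [Field K] (v : K × K × K × K)
    (h1 : v.1 ≠ 0) (h2 : (PIVs₁ v).2.1 ≠ 0) (h3 : (PIVs₂ (PIVs₁ v)).1 ≠ 0)
    (h4 : v.2.1 ≠ 0) (h5 : (PIVs₂ v).1 ≠ 0) (h6 : (PIVs₁ (PIVs₂ v)).2.1 ≠ 0) :
    PIVs₁ (PIVs₂ (PIVs₁ v)) = PIVs₂ (PIVs₁ (PIVs₂ v)) := by
  obtain ⟨q, p, a, b⟩ := v
  simp only [PIVs₁, PIVs₂] at *
  have hA : q * p - a ≠ 0 := by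
    intro h; apply h2; field_simp; linear_combination h
  have hB : q * p + b ≠ 0 := by
    intro h; apply h5; field_simp; linear_combination h
  have e2 : p - a / q = (q * p - a) / q := by field_simp <;> ring_nf
  have e5 : q + b / p = (q * p + b) / p := by field_simp
  rw [e2, e5]
  have hd1 : (a + b) / ((q * p - a) / q) = q * (a + b) / (q * p - a) := by
    rw [div_div_eq_mul_div]; ring_nf
  have hd2 : (a + b) / ((q * p + b) / p) = p * (a + b) / (q * p + b) := by
    rw [div_div_eq_mul_div]; ring_nf
  rw [hd1, hd2]
  have hC : q * (q * p - a) + q * (a + b) ≠ 0 := by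
    intro h
    apply h3
    rw [e2, hd1]
    field_simp
    linear_combination h
  have hD : p * (q * p + b) - p * (a + b) ≠ 0 := by
    intro h
    apply h6
    rw [e5, hd2]
    have hB' : p * q + b ≠ 0 := by rwa [mul_comm]
    field_simp
    linear_combination h
  have hA' : q * p + b - (a + b) ≠ 0 := by ring_nf; ring_nf at hA; exact hA
  have hB'' : q * p - a + (a + b) ≠ 0 := by ring_nf; ring_nf at hB; exact hB
  refine Prod.ext ?_ (Prod.ext ?_ (Prod.ext ?_ ?_)) <;> field_simp <;> ring
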